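/- Let r₀ > 0 and let f : [r₀, ∞) → ℝ be a C¹ function satisfying lim_{r→∞} r · f(r)² = 0. Then ∫_{r₀}^∞ f(r)² dr ≤ 4 ∫_{r₀}^∞ (r − r₀)² (f'(r))² dr. -/

import Mathlib

open MeasureTheory Filter Set

/-- Hardy inequality with weight vanishing at the left endpoint (Lemma 4.1(ii) of the paper). -/
theorem hardy_inequality_endpoint_weight (r₀ : ℝ) (hr₀ : 0 < r₀)
    (f f' : ℝ → ℝ)
    (hderiv : ∀ r ∈ Set.Ici r₀, HasDerivAt f (f' r) r)
    (hcont : ContinuousOn f' (Set.Ici r₀))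
    (hlim : Tendsto (fun r : ℝ => r * (f r) ^ 2) atTop (nhds 0)) :
    ∫⁻ r in Set.Ioi r₀, ENNReal.ofReal ((f r) ^ 2) ≤
      ENNReal.ofReal 4 *
        ∫⁻ r in Set.Ioi r₀, ENNReal.ofReal ((r - r₀) ^ 2 * (f' r) ^ 2) := by
  have hfc : ContinuousOn f (Set.Ici r₀) :=
    fun r hr => ((hderiv r hr).continuousAt).continuousWithinAt
  by_cases hB : (∫⁻ r in Set.Ioi r₀, ENNReal.ofReal ((r - r₀) ^ 2 * (f' r) ^ 2)) = ⊤
  · rw [hB, ENNReal.mul_top (by norm_num)]; exact le_top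
  set B : ℝ := (∫⁻ r in Set.Ioi r₀, ENNReal.ofReal ((r - r₀) ^ 2 * (f' r) ^ 2)).toReal with hBdef
  have hB0 : 0 ≤ B := ENNReal.toReal_nonneg
  -- continuity of weight integrand
  have hwc : ContinuousOn (fun r => (r - r₀) ^ 2 * (f' r) ^ 2) (Set.Ici r₀) := by
    exact (((continuous_id.sub continuous_const).pow 2).continuousOn).mul (hcont.pow 2)
  have hf2c : ContinuousOn (fun r => (f r) ^ 2) (Set.Ici r₀) := hfc.pow 2
  -- truncated weight integral bounded by B
  have hBR : ∀ R, r₀ ≤ R → (∫ r in r₀..R, (r - r₀) ^ 2 * (f' r) ^ 2) ≤ B := by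
    intro R hR
    have hIcc : Set.Icc r₀ R ⊆ Set.Ici r₀ := Icc_subset_Ici_self
    have hint : IntegrableOn (fun r => (r - r₀) ^ 2 * (f' r) ^ 2) (Set.Ioc r₀ R) := by
      exact ((hwc.mono hIcc).integrableOn_compact isCompact_Icc).mono_set Ioc_subset_Icc_self
    rw [intervalIntegral.integral_of_le hR]
    have h1 : ENNReal.ofReal (∫ r in Set.Ioc r₀ R, (r - r₀) ^ 2 * (f' r) ^ 2) =
        ∫⁻ r in Set.Ioc r₀ R, ENNReal.ofReal ((r - r₀) ^ 2 * (f' r) ^ 2) := by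
      exact ofReal_integral_eq_lintegral_ofReal hint
        (Filter.Eventually.of_forall fun r => by positivity)
    have h2 : (∫⁻ r in Set.Ioc r₀ R, ENNReal.ofReal ((r - r₀) ^ 2 * (f' r) ^ 2)) ≤
        ∫⁻ r in Set.Ioi r₀, ENNReal.ofReal ((r - r₀) ^ 2 * (f' r) ^ 2) :=
      lintegral_mono_set Ioc_subset_Ioi_self
    have h3 := ENNReal.toReal_mono hB (h1 ▸ h2)
    rwa [ENNReal.toReal_ofReal (by
      exact setIntegral_nonneg measurableSet_Ioc fun r _ => by positivity)] at h3
  -- key estimate for truncated integral of f^2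
  have hkey : ∀ R, r₀ ≤ R →
      (∫ r in r₀..R, (f r) ^ 2) ≤ 2 * (R * (f R) ^ 2) + 4 * B := by
    intro R hR
    have huIcc : Set.uIcc r₀ R ⊆ Set.Ici r₀ := by
      rw [Set.uIcc_of_le hR]; exact Icc_subset_Ici_self
    have hfint : IntervalIntegrable (fun r => (f r) ^ 2) volume r₀ R :=
      (hf2c.mono huIcc).intervalIntegrable
    have hwint : IntervalIntegrable (fun r => (r - r₀) ^ 2 * (f' r) ^ 2) volume r₀ R :=
      (hwc.mono huIcc).intervalIntegrable
    have hprodc : ContinuousOn (fun r => (r - r₀) * (2 * f r * f' r)) (Set.Ici r₀) := by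
      exact ((continuous_id.sub continuous_const).continuousOn).mul
        (((continuous_const.continuousOn.mul hfc)).mul hcont)
    have hpint : IntervalIntegrable (fun r => (r - r₀) * (2 * f r * f' r)) volume r₀ R :=
      (hprodc.mono huIcc).intervalIntegrable
    -- FTC
    have hftc : (∫ r in r₀..R, ((f r) ^ 2 + (r - r₀) * (2 * f r * f' r))) =
        (R - r₀) * (f R) ^ 2 := by
      have := intervalIntegral.integral_eq_sub_of_hasDerivAt
        (f := fun r => (r - r₀) * (f r) ^ 2)
        (f' := fun r => (f r) ^ 2 + (r - r₀) * (2 * f r * f' r))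
        (a := r₀) (b := R)
        (fun x hx => by
          have h1 : HasDerivAt (fun r : ℝ => r - r₀) 1 x :=
            (hasDerivAt_id x).sub_const r₀
          have h2 : HasDerivAt (fun r => (f r) ^ 2) ((2 : ℕ) * (f x) ^ 1 * f' x) x :=
            (hderiv x (huIcc hx)).pow 2
          have : HasDerivAt (fun r => (r - r₀) * (f r) ^ 2) _ x := h1.mul h2
          refine this.congr_deriv ?_
          push_cast
          ring)
        (hfint.add hpint)
      rw [this]; ring
    have hsub : (∫ r in r₀..R, (f r) ^ 2) =
        (R - r₀) * (f R) ^ 2 - ∫ r in r₀..R, (r - r₀) * (2 * f r * f' r) := by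
      rw [← hftc, intervalIntegral.integral_add hfint hpint]; ring
    have hCS : (∫ r in r₀..R, -((r - r₀) * (2 * f r * f' r))) ≤
        ∫ r in r₀..R, ((f r) ^ 2 / 2 + 2 * ((r - r₀) ^ 2 * (f' r) ^ 2)) := by
      apply intervalIntegral.integral_mono_on hR hpint.neg
        ((hfint.div_const 2).add (hwint.const_mul 2))
      intro x _
      simp only [Pi.neg_apply]
      nlinarith [sq_nonneg (f x + 2 * (x - r₀) * f' x)]
    rw [intervalIntegral.integral_neg] at hCS
    rw [intervalIntegral.integral_add (hfint.div_const 2) (hwint.const_mul 2),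
      intervalIntegral.integral_div, intervalIntegral.integral_const_mul] at hCS
    have hBR' := hBR R hR
    have hRbound : (R - r₀) * (f R) ^ 2 ≤ R * (f R) ^ 2 := by
      have : (0:ℝ) ≤ (f R) ^ 2 := sq_nonneg _
      nlinarith
    nlinarith [hsub, hCS, hBR']
  -- monotone union
  have hUnion : Set.Ioi r₀ = ⋃ n : ℕ, Set.Ioc r₀ (r₀ + n) := by
    ext x
    simp only [mem_Ioi, mem_iUnion, mem_Ioc]
    constructor
    · intro hx
      obtain ⟨n, hn⟩ := exists_nat_ge (x - r₀)
      exact ⟨n, hx, by linarith⟩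
    · rintro ⟨n, hn, _⟩; exact hn
  have hdir : Directed (· ⊆ ·) (fun n : ℕ => Set.Ioc r₀ (r₀ + n)) := by
    apply Monotone.directed_le
    intro m n hmn
    exact Set.Ioc_subset_Ioc le_rfl (by exact_mod_cast add_le_add_right (Nat.cast_le.mpr hmn) r₀)
  -- bound each truncated lintegral
  have hfinal : ∀ n : ℕ, (∫⁻ r in Set.Ioc r₀ (r₀ + n), ENNReal.ofReal ((f r) ^ 2)) ≤
      ENNReal.ofReal (4 * B) := by
    intro n
    have hRn : r₀ ≤ r₀ + n := le_add_of_nonneg_right (Nat.cast_nonneg n)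
    have hIcc : Set.Icc r₀ (r₀ + n) ⊆ Set.Ici r₀ := Icc_subset_Ici_self
    have hint : IntegrableOn (fun r => (f r) ^ 2) (Set.Ioc r₀ (r₀ + n)) :=
      ((hf2c.mono hIcc).integrableOn_compact isCompact_Icc).mono_set Ioc_subset_Icc_self
    have heq : (∫⁻ r in Set.Ioc r₀ (r₀ + n), ENNReal.ofReal ((f r) ^ 2)) =
        ENNReal.ofReal (∫ r in r₀..(r₀ + n), (f r) ^ 2) := by
      rw [intervalIntegral.integral_of_le hRn]
      exact (ofReal_integral_eq_lintegral_ofReal hint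
        (Filter.Eventually.of_forall fun r => sq_nonneg _)).symm
    rw [heq]
    apply ENNReal.ofReal_le_ofReal
    -- A (r₀+n) ≤ 4B via ε argument
    have hA : ∀ ε > (0:ℝ), (∫ r in r₀..(r₀ + n), (f r) ^ 2) ≤ 4 * B + ε := by
      intro ε hε
      have : ∀ᶠ R in atTop, |R * (f R) ^ 2| < ε / 2 := by
        have hev := Metric.tendsto_nhds.mp hlim (ε / 2) (by linarith)
        simp only [Real.dist_eq, sub_zero] at hev
        exact hev
      obtain ⟨R, hRlarge, hRn', hRε⟩ :
          ∃ R, r₀ ≤ R ∧ r₀ + n ≤ R ∧ |R * (f R) ^ 2| < ε / 2 := by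
        obtain ⟨R, hR1, hR2⟩ := (this.and (eventually_ge_atTop (max r₀ (r₀ + n)))).exists
        exact ⟨R, le_trans (le_max_left _ _) hR2, le_trans (le_max_right _ _) hR2, hR1⟩
      have hmono : (∫ r in r₀..(r₀ + n), (f r) ^ 2) ≤ ∫ r in r₀..R, (f r) ^ 2 := by
        have h1 : IntervalIntegrable (fun r => (f r) ^ 2) volume r₀ (r₀ + n) := by
          apply (hf2c.mono _).intervalIntegrable
          rw [Set.uIcc_of_le hRn]; exact Icc_subset_Ici_self
        have h2 : IntervalIntegrable (fun r => (f r) ^ 2) volume (r₀ + n) R := by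
          apply (hf2c.mono _).intervalIntegrable
          rw [Set.uIcc_of_le hRn']
          exact fun x hx => le_trans hRn hx.1
        have h3 : (0:ℝ) ≤ ∫ r in (r₀ + n)..R, (f r) ^ 2 :=
          intervalIntegral.integral_nonneg hRn' fun x _ => sq_nonneg _
        have h4 := intervalIntegral.integral_add_adjacent_intervals h1 h2
        linarith [h4]
      have := hkey R hRlarge
      have habs : R * (f R) ^ 2 < ε / 2 := lt_of_le_of_lt (le_abs_self _) hRε
      linarith
    exact le_of_forall_pos_le_add hA
  calc (∫⁻ r in Set.Ioi r₀, ENNReal.ofReal ((f r) ^ 2)) ≤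
      ENNReal.ofReal (4 * B) := by
        rw [hUnion, setLIntegral_iUnion_of_directed _ hdir]
        exact iSup_le hfinal
    _ = ENNReal.ofReal 4 * ENNReal.ofReal B := by
        rw [ENNReal.ofReal_mul (by norm_num)]
    _ ≤ ENNReal.ofReal 4 *
        ∫⁻ r in Set.Ioi r₀, ENNReal.ofReal ((r - r₀) ^ 2 * (f' r) ^ 2) := by
        apply mul_le_mul_right
        rw [hBdef, ENNReal.ofReal_toReal hB]
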